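/- If a group G acts on a set X such that every G-orbit is infinite, then for any finite subsets A, B of X there exists g in G with gA ∩ B = ∅. -/

import Mathlib

open Pointwise

/-- Topology of pointwise convergence on the symmetric group of a (discrete) set. -/
instance permTop (M : Type*) : TopologicalSpace (Equiv.Perm M) :=
  letI : TopologicalSpace M := ⊥
  TopologicalSpace.induced
    (fun g => ((fun x => g x, fun x => g.symm x) : (M → M) × (M → M))) inferInstance

/-- A topological group is Roelcke precompact if every open neighbourhood `U` of the identity
admits a finite set `E` with `G = U * E * U`. -/
def RoelckePrecompact (G : Type*) [Group G] [TopologicalSpace G] : Prop :=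
  ∀ U : Set G, IsOpen U → (1 : G) ∈ U →
    ∃ E : Finset G, ∀ x : G, ∃ u₁ ∈ U, ∃ e ∈ E, ∃ u₂ ∈ U, x = u₁ * e * u₂

/-- `Y` is a union of finitely many `G`-orbits. -/
def IsFinOrbitUnion {X : Type*} (G : Subgroup (Equiv.Perm X)) (Y : Set X) : Prop :=
  ∃ S : Finset X, Y = ⋃ a ∈ S, MulAction.orbit G a

/-- `G` acts oligomorphically on `Y`: finitely many orbits on `Yⁿ` for all `n`. -/
def Oligo {X : Type*} (G : Subgroup (Equiv.Perm X)) (Y : Set X) : Prop :=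
  ∀ n : ℕ, ∃ T : Finset (Fin n → X), ∀ f : Fin n → X, (∀ i, f i ∈ Y) →
    ∃ t ∈ T, ∃ g ∈ G, ∀ i, g (t i) = f i

/-- `G` is locally oligomorphic on `X`. -/
def LocallyOligo {X : Type*} (G : Subgroup (Equiv.Perm X)) : Prop :=
  ∀ Y : Set X, IsFinOrbitUnion G Y → Oligo G Y

/-- The pointwise stabilizer of `E` in `G ≤ Sym(M)`. -/
def ptStab {M : Type*} (G : Subgroup (Equiv.Perm M)) (E : Set M) : Subgroup (Equiv.Perm M) :=
  G ⊓ ⨅ a ∈ E, MulAction.stabilizer (Equiv.Perm M) a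

/-- The algebraic closure of `E`: the union of the finite orbits of the pointwise
stabilizer of `E` in `G`. -/
def acl {M : Type*} (G : Subgroup (Equiv.Perm M)) (E : Set M) : Set M :=
  {x | (MulAction.orbit (ptStab G E) x).Finite}

/-- The intersection of the open finite-index subgroups of a topological group. -/
def Gcirc (G : Type*) [Group G] [TopologicalSpace G] : Subgroup G :=
  ⨅ U ∈ {U : Subgroup G | IsOpen (U : Set G) ∧ U.index ≠ 0}, U

-- probes

/-- **Neumann's Lemma.** If every `G`-orbit on `X` is infinite, then any two finite subsets
`A, B ⊆ X` can be separated: `gA ∩ B = ∅` for some `g ∈ G`. -/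
theorem neumann_lemma {G X : Type*} [Group G] [MulAction G X]
    (horb : ∀ x : X, (MulAction.orbit G x).Infinite)
    {A B : Set X} (hA : A.Finite) (hB : B.Finite) :
    ∃ g : G, (g • A) ∩ B = ∅ := by
  by_contra hcon
  push_neg at hcon
  classical
  -- index set: pairs (a, b)
  set s : Finset (X × X) := hA.toFinset ×ˢ hB.toFinset with hs
  -- choose coset representatives
  have hg : ∀ p : X × X, ∃ g0 : G, (∃ h : G, h • p.1 = p.2) → g0 • p.1 = p.2 := by
    intro p
    by_cases h : ∃ h : G, h • p.1 = p.2
    · obtain ⟨h0, hh0⟩ := h; exact ⟨h0, fun _ => hh0⟩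
    · exact ⟨1, fun hh => absurd hh h⟩
  choose g0 hg0 using hg
  have hcovers : ⋃ p ∈ s, g0 p • ((MulAction.stabilizer G p.1 : Subgroup G) : Set G) = Set.univ := by
    apply Set.eq_univ_of_forall
    intro g
    obtain ⟨x, hxA, hxB⟩ := hcon g
    obtain ⟨a, haA, rfl⟩ := hxA
    refine Set.mem_biUnion (show (a, g • a) ∈ s by
      simp [hs, hA.mem_toFinset, hB.mem_toFinset, haA, hxB]) ?_
    have hga : g0 (a, g • a) • a = g • a := hg0 (a, g • a) ⟨g, rfl⟩
    refine ⟨(g0 (a, g • a))⁻¹ * g, ?_, by simp [smul_eq_mul]⟩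
    simp [MulAction.mem_stabilizer_iff, mul_smul, hga, inv_smul_eq_iff]
  obtain ⟨p, hp, hfi⟩ := Subgroup.exists_finiteIndex_of_leftCoset_cover hcovers
  have : Finite (G ⧸ MulAction.stabilizer G p.1) := by haveI := hfi; exact Subgroup.finite_quotient_of_finiteIndex
  have : (MulAction.orbit G p.1).Finite := by
    exact Set.finite_coe_iff.mp ((MulAction.orbitEquivQuotientStabilizer G p.1).finite_iff.mpr ‹_›)
  exact horb p.1 this
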